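/- For 0 ≤ t ≤ k−1 define Madsen's sequences I_{k,t} = (2^{k−1} − 2^{t−1}, 2^{k−2} − 2^{t−2}, ..., 2^{k−t} − 1, 2^{k−t−1}, ..., 2, 1) ∈ ℕ^k (with the convention that the term 2^{−1} is omitted, so I_{k,0} = (2^{k−1}, 2^{k−2}, ..., 2, 1)). Then |I_{k,t}| = 2^k − 2^t, and every admissible sequence I of length k and positive degree with nonnegative excess can be written uniquely as I = Σ_{t=0}^{k−1} a_t I_{k,t} with a_t ∈ ℕ. -/
import Mathlib


/-- Madsen's sequences
`I_{k,t} = (2^{k−1} − 2^{t−1}, 2^{k−2} − 2^{t−2}, ..., 2^{k−t} − 1, 2^{k−t−1}, ..., 2, 1)`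
(with the term `2^{−1}` omitted, so `I_{k,0} = (2^{k−1},...,2,1)`), encoded as functions
`ℕ → ℕ` with index `i` the `(i+1)`-st entry from the right: entry `2^i − 2^{i+t−k}` when
`k ≤ i + t`, entry `2^i` otherwise. -/
def Ikt (k t : ℕ) : ℕ → ℕ := fun i =>
  if i < k then (if k ≤ i + t then 2 ^ i - 2 ^ (i + t - k) else 2 ^ i) else 0

/-- Dyer-Lashof admissibility: each entry is at most twice the next, `i_{j+1} ≤ 2 i_j`. -/
def DLAdmissible (k : ℕ) (I : ℕ → ℕ) : Prop := ∀ j, j + 1 < k → I (j + 1) ≤ 2 * I j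

/-- Nonnegative excess: `e(I) = i_k − (i_{k−1} + ⋯ + i_1) ≥ 0`. -/
def NonnegExcess (k : ℕ) (I : ℕ → ℕ) : Prop :=
  ∑ i ∈ Finset.range (k - 1), I i ≤ I (k - 1)

/-- `|I_{k,t}| = 2^k − 2^t` for `0 ≤ t ≤ k−1`, and every admissible sequence `I` of
length `k`, positive degree and nonnegative excess can be written uniquely as
`I = Σ_{t=0}^{k−1} a_t I_{k,t}` with `a_t ∈ ℕ`. -/
lemma sum_two_pow (n : ℕ) : ∑ i ∈ Finset.range n, 2 ^ i = 2 ^ n - 1 := by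
  induction n with
  | zero => simp
  | succ n ih =>
    have h1 : 1 ≤ 2 ^ n := Nat.one_le_two_pow
    rw [Finset.sum_range_succ, ih, pow_succ]
    omega

lemma sum_two_pow_int (n : ℕ) : ∑ i ∈ Finset.range n, (2:ℤ) ^ i = 2 ^ n - 1 := by
  induction n with
  | zero => simp
  | succ n ih => rw [Finset.sum_range_succ, ih, pow_succ]; ring

lemma Ikt_zero (k t i : ℕ) (h : k ≤ i) : Ikt k t i = 0 := by
  unfold Ikt; rw [if_neg (by omega)]

lemma Ikt_cast (k t i : ℕ) (ht : t ≤ k) :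
    (Ikt k t i : ℤ) = if i < k then 2 ^ i - (if k ≤ i + t then 2 ^ (i + t - k) else 0) else 0 := by
  unfold Ikt
  by_cases h1 : i < k
  · simp only [if_pos h1]
    by_cases h2 : k ≤ i + t
    · simp only [if_pos h2]
      have hle : 2 ^ (i + t - k) ≤ 2 ^ i := Nat.pow_le_pow_right (by norm_num) (by omega)
      rw [Nat.cast_sub hle]
      push_cast
      ring
    · simp [h2]
  · simp [h1]

lemma Ikt_sum (k t : ℕ) (ht : t < k) :
    ∑ i ∈ Finset.range k, Ikt k t i = 2 ^ k - 2 ^ t := by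
  have h2t : (2:ℕ) ^ t ≤ 2 ^ k := Nat.pow_le_pow_right (by norm_num) ht.le
  have key : ∑ i ∈ Finset.range k, (Ikt k t i : ℤ) = 2 ^ k - 2 ^ t := by
    have h1 : ∀ i ∈ Finset.range k,
        (Ikt k t i : ℤ) = 2 ^ i - (if k ≤ i + t then 2 ^ (i + t - k) else 0) := by
      intro i hi
      rw [Ikt_cast k t i ht.le, if_pos (Finset.mem_range.mp hi)]
    rw [Finset.sum_congr rfl h1, Finset.sum_sub_distrib, sum_two_pow_int]
    have h3 : ∑ i ∈ Finset.range k, (if k ≤ i + t then (2:ℤ) ^ (i + t - k) else 0)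
        = 2 ^ t - 1 := by
      rw [Finset.sum_ite, Finset.sum_const_zero, add_zero]
      have hf : (Finset.range k).filter (fun i => k ≤ i + t) = Finset.Ico (k - t) k := by
        ext i
        simp only [Finset.mem_filter, Finset.mem_range, Finset.mem_Ico]
        omega
      rw [hf, Finset.sum_Ico_eq_sum_range, show k - (k - t) = t by omega]
      rw [Finset.sum_congr rfl (fun i _ => by rw [show k - t + i + t - k = i by omega])]
      exact sum_two_pow_int t
    rw [h3]
    ring
  have : ((∑ i ∈ Finset.range k, Ikt k t i : ℕ) : ℤ) = ((2 ^ k - 2 ^ t : ℕ) : ℤ) := by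
    rw [Nat.cast_sub h2t]
    push_cast
    exact key
  exact_mod_cast this

lemma Ikt_excess (k t : ℕ) (hk : 1 ≤ k) (ht : t < k) :
    ∑ i ∈ Finset.range (k - 1), Ikt k t i + (if t = 0 then 1 else 0) = Ikt k t (k - 1) := by
  have hs := Ikt_sum k t ht
  have hsplit : ∑ i ∈ Finset.range k, Ikt k t i
      = ∑ i ∈ Finset.range (k - 1), Ikt k t i + Ikt k t (k - 1) := by
    have h := Finset.sum_range_succ (Ikt k t) (k - 1)
    rw [show k - 1 + 1 = k by omega] at h
    exact h
  by_cases h : t = 0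
  · subst h
    have hlast : Ikt k 0 (k - 1) = 2 ^ (k - 1) := by
      unfold Ikt
      rw [if_pos (by omega : k - 1 < k), if_neg (by omega : ¬ k ≤ k - 1 + 0)]
    have e1 : (2:ℕ) ^ k = 2 ^ (k - 1) * 2 := by
      conv_lhs => rw [show k = (k - 1) + 1 by omega]
      rw [pow_succ]
    have e2 : 1 ≤ (2:ℕ) ^ (k - 1) := Nat.one_le_two_pow
    rw [hsplit, hlast, pow_zero] at hs
    rw [if_pos rfl, hlast]
    omega
  · have ht1 : 1 ≤ t := by omega
    have hlast : Ikt k t (k - 1) = 2 ^ (k - 1) - 2 ^ (t - 1) := by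
      unfold Ikt
      rw [if_pos (by omega : k - 1 < k), if_pos (by omega : k ≤ k - 1 + t),
        show k - 1 + t - k = t - 1 by omega]
    have e1 : (2:ℕ) ^ k = 2 ^ (k - 1) * 2 := by
      conv_lhs => rw [show k = (k - 1) + 1 by omega]
      rw [pow_succ]
    have e2 : (2:ℕ) ^ t = 2 ^ (t - 1) * 2 := by
      conv_lhs => rw [show t = (t - 1) + 1 by omega]
      rw [pow_succ]
    have e3 : (2:ℕ) ^ (t - 1) ≤ 2 ^ (k - 1) := Nat.pow_le_pow_right (by norm_num) (by omega)
    rw [hsplit, hlast] at hs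
    rw [if_neg h, hlast]
    omega

lemma Ikt_slack (k t j : ℕ) (ht : t < k) (hj : j + 1 < k) :
    Ikt k t (j + 1) + (if t = k - 1 - j then 1 else 0) = 2 * Ikt k t j := by
  unfold Ikt
  rw [if_pos (by omega : j + 1 < k), if_pos (by omega : j < k)]
  by_cases h1 : k ≤ j + t
  · rw [if_pos (by omega : k ≤ j + 1 + t), if_pos h1, if_neg (by omega : ¬ t = k - 1 - j)]
    have e1 : (2:ℕ) ^ (j + 1) = 2 ^ j * 2 := pow_succ 2 j
    have e2 : (2:ℕ) ^ (j + 1 + t - k) = 2 ^ (j + t - k) * 2 := by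
      rw [show j + 1 + t - k = (j + t - k) + 1 by omega, pow_succ]
    have e3 : (2:ℕ) ^ (j + t - k) ≤ 2 ^ j := Nat.pow_le_pow_right (by norm_num) (by omega)
    omega
  · by_cases h2 : k ≤ j + 1 + t
    · rw [if_pos h2, if_neg h1, if_pos (by omega : t = k - 1 - j),
        show j + 1 + t - k = 0 by omega, pow_zero]
      have e1 : (2:ℕ) ^ (j + 1) = 2 ^ j * 2 := pow_succ 2 j
      have e2 : 1 ≤ (2:ℕ) ^ (j + 1) := Nat.one_le_two_pow
      omega
    · rw [if_neg h2, if_neg h1, if_neg (by omega : ¬ t = k - 1 - j)]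
      have e1 : (2:ℕ) ^ (j + 1) = 2 ^ j * 2 := pow_succ 2 j
      omega

lemma sum_slack (k : ℕ) (a : ℕ → ℕ) (j : ℕ) (hj : j + 1 < k) :
    (∑ t ∈ Finset.range k, a t * Ikt k t (j + 1)) + a (k - 1 - j)
      = 2 * ∑ t ∈ Finset.range k, a t * Ikt k t j := by
  have h1 : a (k - 1 - j) = ∑ t ∈ Finset.range k, a t * (if t = k - 1 - j then 1 else 0) := by
    simp only [mul_ite, mul_one, mul_zero]
    rw [Finset.sum_ite_eq' (Finset.range k) (k - 1 - j) a,
      if_pos (Finset.mem_range.mpr (by omega))]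
  rw [h1, ← Finset.sum_add_distrib, Finset.mul_sum]
  refine Finset.sum_congr rfl fun t htm => ?_
  rw [← Nat.left_distrib, Ikt_slack k t j (Finset.mem_range.mp htm) hj]
  ring

lemma sum_excess (k : ℕ) (hk : 1 ≤ k) (a : ℕ → ℕ) :
    ∑ t ∈ Finset.range k, a t * Ikt k t (k - 1)
      = (∑ i ∈ Finset.range (k - 1), ∑ t ∈ Finset.range k, a t * Ikt k t i) + a 0 := by
  have h0 : a 0 = ∑ t ∈ Finset.range k, a t * (if t = 0 then 1 else 0) := by
    simp only [mul_ite, mul_one, mul_zero]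
    rw [Finset.sum_ite_eq' (Finset.range k) 0 a, if_pos (Finset.mem_range.mpr (by omega))]
  rw [Finset.sum_comm, h0, ← Finset.sum_add_distrib]
  refine Finset.sum_congr rfl fun t htm => ?_
  rw [← Finset.mul_sum, ← Nat.left_distrib, Ikt_excess k t hk (Finset.mem_range.mp htm)]

def madsenCoeff (k : ℕ) (I : ℕ → ℕ) : ℕ → ℕ := fun t =>
  if t = 0 then I (k - 1) - ∑ i ∈ Finset.range (k - 1), I i
  else if t < k then 2 * I (k - 1 - t) - I (k - t) else 0

theorem Ikt_decomposition (k : ℕ) (hk : 1 ≤ k) :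
    (∀ t, t ≤ k - 1 → ∑ i ∈ Finset.range k, Ikt k t i = 2 ^ k - 2 ^ t) ∧
    (∀ I : ℕ → ℕ, (∀ i, k ≤ i → I i = 0) → DLAdmissible k I → NonnegExcess k I →
        0 < ∑ i ∈ Finset.range k, I i →
        ∃! a : ℕ → ℕ, (∀ t, k ≤ t → a t = 0) ∧
          ∀ i, I i = ∑ t ∈ Finset.range k, a t * Ikt k t i) := by
  refine ⟨fun t ht => Ikt_sum k t (by omega), ?_⟩
  intro I hsupp hadm hex hpos
  set a : ℕ → ℕ := madsenCoeff k I with ha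
  set J : ℕ → ℕ := fun i => ∑ t ∈ Finset.range k, a t * Ikt k t i with hJ
  have hJ0 : ∀ i, k ≤ i → J i = 0 := by
    intro i hi
    simp only [hJ]
    exact Finset.sum_eq_zero fun t _ => by rw [Ikt_zero k t i hi, mul_zero]
  have hF2 : ∀ j, j + 1 < k → J (j + 1) + a (k - 1 - j) = 2 * J j :=
    fun j hj => sum_slack k a j hj
  have hF3 : J (k - 1) = (∑ i ∈ Finset.range (k - 1), J i) + a 0 := by
    simp only [hJ]
    exact sum_excess k hk a
  have hG2 : ∀ j, j + 1 < k → I (j + 1) + a (k - 1 - j) = 2 * I j := by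
    intro j hj
    have h1 := hadm j hj
    have h2 : a (k - 1 - j) = 2 * I j - I (j + 1) := by
      simp only [ha, madsenCoeff]
      rw [if_neg (by omega : ¬ k - 1 - j = 0), if_pos (by omega : k - 1 - j < k),
        show k - 1 - (k - 1 - j) = j by omega, show k - (k - 1 - j) = j + 1 by omega]
    omega
  have hG3 : I (k - 1) = (∑ i ∈ Finset.range (k - 1), I i) + a 0 := by
    have h2 : a 0 = I (k - 1) - ∑ i ∈ Finset.range (k - 1), I i := by
      simp [ha, madsenCoeff]
    have h3 := hex
    unfold NonnegExcess at h3
    omega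
  have hdiff : ∀ j, j < k → (I j : ℤ) - (J j : ℤ) = 2 ^ j * ((I 0 : ℤ) - (J 0 : ℤ)) := by
    intro j
    induction j with
    | zero => intro _; ring
    | succ j ih =>
      intro hj
      have h1 := ih (by omega)
      have h2' : (J (j + 1) : ℤ) + (a (k - 1 - j) : ℤ) = 2 * J j := by
        exact_mod_cast hF2 j hj
      have h3' : (I (j + 1) : ℤ) + (a (k - 1 - j) : ℤ) = 2 * I j := by
        exact_mod_cast hG2 j hj
      linear_combination h3' - h2' + 2 * h1
  have hc : (I 0 : ℤ) = J 0 := by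
    have h2' : (J (k - 1) : ℤ) = (∑ i ∈ Finset.range (k - 1), (J i : ℤ)) + a 0 := by
      exact_mod_cast hF3
    have h3' : (I (k - 1) : ℤ) = (∑ i ∈ Finset.range (k - 1), (I i : ℤ)) + a 0 := by
      exact_mod_cast hG3
    have h4 : ∑ i ∈ Finset.range (k - 1), ((I i : ℤ) - J i)
        = (2 ^ (k - 1) - 1) * ((I 0 : ℤ) - J 0) := by
      rw [Finset.sum_congr rfl
        (fun i hi => hdiff i (by have := Finset.mem_range.mp hi; omega))]
      rw [← Finset.sum_mul, sum_two_pow_int]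
    have h5 : (I (k - 1) : ℤ) - J (k - 1) = 2 ^ (k - 1) * ((I 0 : ℤ) - J 0) :=
      hdiff (k - 1) (by omega)
    have h6 : ∑ i ∈ Finset.range (k - 1), ((I i : ℤ) - J i) = (I (k - 1) : ℤ) - J (k - 1) := by
      rw [Finset.sum_sub_distrib]
      linarith
    linear_combination h4 - h6 - h5
  have hIJ : ∀ i, I i = J i := by
    intro i
    by_cases hi : i < k
    · have h7 : (I i : ℤ) = J i := by linear_combination hdiff i hi + 2 ^ i * hc
      exact_mod_cast h7
    · rw [hsupp i (by omega), hJ0 i (by omega)]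
  refine ⟨a, ⟨?_, ?_⟩, ?_⟩
  · intro t htk
    have h1 : ¬ t = 0 := by omega
    have h2 : ¬ t < k := by omega
    simp [ha, madsenCoeff, h1, h2]
  · intro i
    rw [hIJ i]
  · rintro b ⟨hb0, hbI⟩
    have hbF2 : ∀ j, j + 1 < k → I (j + 1) + b (k - 1 - j) = 2 * I j := by
      intro j hj
      have h := sum_slack k b j hj
      rw [← hbI (j + 1), ← hbI j] at h
      exact h
    have hbF3 : I (k - 1) = (∑ i ∈ Finset.range (k - 1), I i) + b 0 := by
      have h := sum_excess k hk b
      rw [← hbI (k - 1),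
        Finset.sum_congr rfl (fun i (_ : i ∈ Finset.range (k - 1)) => (hbI i).symm)] at h
      exact h
    funext t
    by_cases ht0 : t = 0
    · subst ht0
      omega
    · by_cases htk : t < k
      · have hj : (k - 1 - t) + 1 < k := by omega
        have h1 := hbF2 (k - 1 - t) hj
        have h2 := hG2 (k - 1 - t) hj
        rw [show k - 1 - (k - 1 - t) = t by omega] at h1 h2
        omega
      · rw [hb0 t (by omega)]
        simp [ha, madsenCoeff, ht0, htk]
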